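/- Let F be a field of characteristic zero, p a prime, and c_1, …, c_t nonnegative integers with c_1 ≥ c_i for all i. Let A := F[x_1, …, x_t]/⟨Φ_{p^{c_1}}(x_1), …, Φ_{p^{c_t}}(x_t)⟩ and a := F[x]/⟨Φ_{p^{c_1}}(x)⟩. Then there is an F-algebra isomorphism Θ from A to the product algebra a^N of N copies of a, where N = φ(p^{c_2}) ⋯ φ(p^{c_t}) = dim_F(A)/dim_F(a). -/

import Mathlib

open Polynomial

/-- The ideal ⟨Φ_{p^{c_1}}(x_1), …, Φ_{p^{c_t}}(x_t)⟩ of F[x_1,…,x_t]. -/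
noncomputable def cyclotomicIdeal (F : Type*) [Field F] (p t : ℕ) (c : Fin t → ℕ) :
    Ideal (MvPolynomial (Fin t) F) :=
  Ideal.span (Set.range fun i : Fin t =>
    Polynomial.aeval (MvPolynomial.X i) (cyclotomic (p ^ c i) F))

section Aux

set_option linter.unusedVariables false

/-- Reindexing a power of an algebra along an equivalence of index types. -/
def piReindexAlgEquiv (F a : Type*) [CommSemiring F] [Semiring a] [Algebra F a]
    {ι κ : Type*} (e : ι ≃ κ) : (ι → a) ≃ₐ[F] (κ → a) where
  toFun f := f ∘ e.symm
  invFun g := g ∘ e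
  left_inv f := by ext i; simp
  right_inv g := by ext i; simp
  map_mul' f g := rfl
  map_add' f g := rfl
  commutes' x := rfl

/-- Currying, as an algebra equivalence. -/
def piCurryAlgEquiv (F a : Type*) [CommSemiring F] [Semiring a] [Algebra F a]
    (ι κ : Type*) : (ι × κ → a) ≃ₐ[F] (ι → κ → a) :=
  { Equiv.curry ι κ a with
    map_mul' := fun f g => rfl
    map_add' := fun f g => rfl
    commutes' := fun x => rfl }

/-- The diagonal embedding `a ≃ₐ (ι → a)` for a unique index type. -/
def piUniqueAlgEquiv (F a ι : Type*) [CommSemiring F] [Semiring a] [Algebra F a]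
    [Unique ι] : a ≃ₐ[F] (ι → a) where
  toFun x := fun _ => x
  invFun f := f default
  left_inv x := rfl
  right_inv f := by funext i; rw [Unique.eq_default i]
  map_mul' x y := rfl
  map_add' x y := rfl
  commutes' x := rfl

end Aux

/-- In `a = AdjoinRoot (cyclotomic (p^m) F)`, for `e ≤ m`, the cyclotomic polynomial
`Φ_{p^e}` splits into linear factors whose pairwise differences are units. -/
lemma cyclotomic_factors_in_adjoinRoot (F : Type*) [Field F] [CharZero F]
    {p : ℕ} (hp : p.Prime) (m e : ℕ) (he : e ≤ m) :
    ∃ r : Fin (p ^ e).totient → AdjoinRoot (cyclotomic (p ^ m) F),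
      cyclotomic (p ^ e) (AdjoinRoot (cyclotomic (p ^ m) F)) = ∏ k, (X - C (r k)) ∧
      ∀ k j, k ≠ j → IsUnit (r k - r j) := by
  haveI : Fact (Irreducible (cyclotomic (p ^ m) ℚ)) :=
    ⟨cyclotomic.irreducible_rat (pow_pos hp.pos m)⟩
  set K := AdjoinRoot (cyclotomic (p ^ m) ℚ) with hK
  haveI : CharZero K := charZero_of_injective_algebraMap (algebraMap ℚ K).injective
  set a := AdjoinRoot (cyclotomic (p ^ m) F) with ha
  have hroota : (cyclotomic (p ^ m) a).IsRoot (AdjoinRoot.root (cyclotomic (p ^ m) F)) := by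
    have := AdjoinRoot.isRoot_root (cyclotomic (p ^ m) F)
    rwa [map_cyclotomic] at this
  have hev : Polynomial.eval₂ ((algebraMap F a).comp (algebraMap ℚ F))
      (AdjoinRoot.root (cyclotomic (p ^ m) F)) (cyclotomic (p ^ m) ℚ) = 0 := by
    rw [eval₂_eq_eval_map, map_cyclotomic]
    exact hroota
  set ψ : K →+* a := AdjoinRoot.lift ((algebraMap F a).comp (algebraMap ℚ F))
    (AdjoinRoot.root (cyclotomic (p ^ m) F)) hev with hψ
  haveI : NeZero ((p ^ m : ℕ) : K) := ⟨Nat.cast_ne_zero.mpr (pow_pos hp.pos m).ne'⟩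
  have hrootK : (cyclotomic (p ^ m) K).IsRoot (AdjoinRoot.root (cyclotomic (p ^ m) ℚ)) := by
    have := AdjoinRoot.isRoot_root (cyclotomic (p ^ m) ℚ)
    rwa [map_cyclotomic] at this
  have hθ : IsPrimitiveRoot (AdjoinRoot.root (cyclotomic (p ^ m) ℚ)) (p ^ m) :=
    (isRoot_cyclotomic_iff).mp hrootK
  have hμ : IsPrimitiveRoot ((AdjoinRoot.root (cyclotomic (p ^ m) ℚ)) ^ (p ^ (m - e))) (p ^ e) := by
    refine IsPrimitiveRoot.pow (pow_pos hp.pos m) hθ ?_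
    rw [← pow_add, Nat.sub_add_cancel he]
  have hfac : cyclotomic (p ^ e) K = ∏ μ ∈ primitiveRoots (p ^ e) K, (X - C μ) :=
    cyclotomic_eq_prod_X_sub_primitiveRoots hμ
  have hcard : (primitiveRoots (p ^ e) K).card = (p ^ e).totient :=
    hμ.card_primitiveRoots
  let ek : {x // x ∈ primitiveRoots (p ^ e) K} ≃ Fin (p ^ e).totient :=
    (primitiveRoots (p ^ e) K).equivFinOfCardEq hcard
  refine ⟨fun k => ψ ((ek.symm k : K)), ?_, ?_⟩
  · have : cyclotomic (p ^ e) a = (cyclotomic (p ^ e) K).map ψ := (map_cyclotomic _ ψ).symm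
    rw [this, hfac, Polynomial.map_prod,
      ← Finset.prod_coe_sort (primitiveRoots (p ^ e) K) (fun μ => map ψ (X - C μ)),
      ← Equiv.prod_comp ek.symm (fun x => map ψ (X - C (x : K)))]
    simp [Polynomial.map_sub]
  · intro k j hkj
    have hne : (ek.symm k : K) ≠ (ek.symm j : K) := by
      intro h
      exact hkj (by simpa using ek.symm.injective (Subtype.ext h))
    have : IsUnit ((ek.symm k : K) - (ek.symm j : K)) :=
      (sub_ne_zero.mpr hne).isUnit
    simpa [map_sub] using this.map ψ

/-- CRT for a product of linear polynomials whose roots have unit pairwise differences. -/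
noncomputable def crtPi {F : Type*} [CommSemiring F] {S : Type*} [CommRing S] [Algebra F S]
    {N : ℕ} (r : Fin N → S) (hr : ∀ k j, k ≠ j → IsUnit (r k - r j)) :
    (S[X] ⧸ Ideal.span {∏ k, (X - C (r k))}) ≃ₐ[F] (Fin N → S) := by
  have hcop : ∀ (k j : Fin N), k ≠ j → IsCoprime ((X : S[X]) - C (r k)) (X - C (r j)) := by
    intro k j hkj
    obtain ⟨u, hu⟩ := hr k j hkj
    refine ⟨-C ((u⁻¹ : Sˣ) : S), C ((u⁻¹ : Sˣ) : S), ?_⟩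
    have : (-C ((u⁻¹ : Sˣ) : S)) * (X - C (r k)) + C ((u⁻¹ : Sˣ) : S) * (X - C (r j))
        = C (((u⁻¹ : Sˣ) : S) * (r k - r j)) := by
      rw [map_mul, map_sub]; ring
    rw [this, ← hu, Units.inv_mul, map_one]
  have hinf : Ideal.span {∏ k, ((X : S[X]) - C (r k))}
      = ⨅ k, Ideal.span {(X : S[X]) - C (r k)} :=
    (Ideal.iInf_span_singleton hcop).symm
  have hpair : Pairwise (Function.onFun IsCoprime fun k => Ideal.span {(X : S[X]) - C (r k)}) :=
    fun k j hkj => (Ideal.isCoprime_span_singleton_iff _ _).mpr (hcop k j hkj)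
  refine ((Ideal.quotientEquivAlgOfEq F hinf).trans
    (AlgEquiv.ofRingEquiv (f := Ideal.quotientInfRingEquivPiQuotient _ hpair) ?_)).trans
    (AlgEquiv.piCongrRight fun k => (quotientSpanXSubCAlgEquiv (r k)).restrictScalars F)
  intro x
  rfl

lemma pi_adjoin_step (F : Type*) [Field F] [CharZero F]
    {p : ℕ} (hp : p.Prime) (m e : ℕ) (he : e ≤ m) (m' : ℕ) :
    Nonempty
      (((Fin m' → AdjoinRoot (cyclotomic (p ^ m) F))[X]
          ⧸ Ideal.span {cyclotomic (p ^ e) (Fin m' → AdjoinRoot (cyclotomic (p ^ m) F))})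
        ≃ₐ[F] (Fin (m' * (p ^ e).totient) → AdjoinRoot (cyclotomic (p ^ m) F))) := by
  obtain ⟨r, hfac, hr⟩ := cyclotomic_factors_in_adjoinRoot F hp m e he
  have hfac' : cyclotomic (p ^ e) (Fin m' → AdjoinRoot (cyclotomic (p ^ m) F))
      = ∏ k, (X - C ((fun (_ : Fin m') => r k))) := by
    have h1 : cyclotomic (p ^ e) (Fin m' → AdjoinRoot (cyclotomic (p ^ m) F))
        = (cyclotomic (p ^ e) (AdjoinRoot (cyclotomic (p ^ m) F))).map
            (Pi.constRingHom (Fin m') (AdjoinRoot (cyclotomic (p ^ m) F))) :=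
      (map_cyclotomic _ _).symm
    rw [h1, hfac, Polynomial.map_prod]
    refine Finset.prod_congr rfl fun k _ => ?_
    rw [Polynomial.map_sub, Polynomial.map_X, Polynomial.map_C]
    rfl
  have hr'' : ∀ k j : Fin (p ^ e).totient, k ≠ j →
      IsUnit ((fun (_ : Fin m') => r k) - (fun (_ : Fin m') => r j)) := by
    intro k j h
    have h2 : ((fun (_ : Fin m') => r k) - (fun (_ : Fin m') => r j))
        = Pi.constRingHom (Fin m') (AdjoinRoot (cyclotomic (p ^ m) F)) (r k - r j) := rfl
    rw [h2]
    exact (hr k j h).map _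
  exact ⟨((Ideal.quotientEquivAlgOfEq F (by rw [hfac'])).trans
      (crtPi (fun k (_ : Fin m') => r k) hr'')).trans
    (((piCurryAlgEquiv F (AdjoinRoot (cyclotomic (p ^ m) F))
        (Fin (p ^ e).totient) (Fin m')).symm).trans
      (piReindexAlgEquiv F (AdjoinRoot (cyclotomic (p ^ m) F))
        (finProdFinEquiv.trans (finCongr (mul_comm _ _)))))⟩

/-- Algebra version of `Ideal.polynomialQuotientEquivQuotientPolynomial`. -/
noncomputable def polyQuotAlgEquiv (F : Type*) [CommSemiring F] {R : Type*} [CommRing R]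
    [Algebra F R] (I : Ideal R) :
    (Polynomial (R ⧸ I)) ≃ₐ[F] (R[X] ⧸ Ideal.map (C : R →+* R[X]) I) := by
  refine AlgEquiv.ofRingEquiv (f := Ideal.polynomialQuotientEquivQuotientPolynomial I) ?_
  intro x
  have h1 : (algebraMap F (Polynomial (R ⧸ I))) x
      = (Polynomial.C (algebraMap F R x)).map (Ideal.Quotient.mk I) := by
    rw [Polynomial.map_C]
    rfl
  rw [h1, Ideal.polynomialQuotientEquivQuotientPolynomial_map_mk]
  rfl

section MvQuot

noncomputable abbrev mvQuotCommRing (σ F : Type*) [Field F] (I : Ideal (MvPolynomial σ F)) :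
    CommRing (MvPolynomial σ F ⧸ I) := Ideal.Quotient.commRing I

attribute [local instance] mvQuotCommRing

lemma peel (F : Type*) [Field F] (p : ℕ) (n : ℕ) (d : Fin (n + 1) → ℕ) :
    Nonempty ((MvPolynomial (Fin (n + 1)) F ⧸ cyclotomicIdeal F p (n + 1) d) ≃ₐ[F]
      ((MvPolynomial (Fin n) F ⧸ cyclotomicIdeal F p n (d ∘ Fin.succ))[X]
        ⧸ Ideal.span {cyclotomic (p ^ d 0)
            (MvPolynomial (Fin n) F ⧸ cyclotomicIdeal F p n (d ∘ Fin.succ))})) := by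
  classical
  set R := MvPolynomial (Fin n) F with hR
  set I := cyclotomicIdeal F p n (d ∘ Fin.succ) with hI
  set J : Ideal R[X] := Ideal.span {cyclotomic (p ^ d 0) R} with hJ
  set e₁ := MvPolynomial.finSuccEquiv F n with he₁
  have key0 : (Polynomial.aeval (Polynomial.X : R[X])) (cyclotomic (p ^ d 0) F)
      = cyclotomic (p ^ d 0) R := by
    have halg : algebraMap F R[X] = (C : R →+* R[X]).comp (algebraMap F R) := rfl
    rw [aeval_def, halg, ← Polynomial.eval₂_map, Polynomial.eval₂_C_X, map_cyclotomic]
  have keyj : ∀ j : Fin n, (Polynomial.aeval (Polynomial.C (MvPolynomial.X j : R)))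
      (cyclotomic (p ^ d j.succ) F)
      = Polynomial.C ((Polynomial.aeval (MvPolynomial.X j : R)) (cyclotomic (p ^ d j.succ) F)) := by
    intro j
    exact (Polynomial.aeval_algHom_apply
      ((Polynomial.CAlgHom : R →ₐ[R] R[X]).restrictScalars F) (MvPolynomial.X j) _)
  have himg : I.map (C : R →+* R[X]) ⊔ J
      = Ideal.map (e₁ : MvPolynomial (Fin (n + 1)) F →+* R[X])
          (cyclotomicIdeal F p (n + 1) d) := by
    rw [cyclotomicIdeal, Ideal.map_span, ← Set.range_comp]
    have hcomp : ((e₁ : MvPolynomial (Fin (n + 1)) F →+* R[X]) ∘ fun i : Fin (n + 1) =>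
        (Polynomial.aeval (MvPolynomial.X i)) (cyclotomic (p ^ d i) F))
        = fun i : Fin (n + 1) =>
            (Polynomial.aeval (e₁ (MvPolynomial.X i))) (cyclotomic (p ^ d i) F) := by
      funext i
      simp only [Function.comp_apply]
      exact (Polynomial.aeval_algHom_apply e₁.toAlgHom (MvPolynomial.X i) _).symm
    rw [hcomp, Fin.range_fin_succ]
    have h0 : (Polynomial.aeval (e₁ (MvPolynomial.X 0))) (cyclotomic (p ^ d 0) F)
        = cyclotomic (p ^ d 0) R := by
      rw [he₁, MvPolynomial.finSuccEquiv_X_zero]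
      exact key0
    have hsucc : (Fin.tail (fun i : Fin (n + 1) =>
        (Polynomial.aeval (e₁ (MvPolynomial.X i))) (cyclotomic (p ^ d i) F)))
        = fun j : Fin n => Polynomial.C
            ((Polynomial.aeval (MvPolynomial.X j : R)) (cyclotomic (p ^ (d ∘ Fin.succ) j) F)) := by
      funext j
      simp only [Fin.tail, he₁, MvPolynomial.finSuccEquiv_X_succ]
      exact keyj j
    rw [h0, hsucc, Ideal.span_insert, sup_comm]
    rw [hI, cyclotomicIdeal, Ideal.map_span, ← Set.range_comp]
    congr 1
  haveI : (J.map (Ideal.Quotient.mkₐ F (I.map (C : R →+* R[X])))).IsTwoSided :=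
    ⟨fun {a} b ha => Eq.mp (congrArg (· ∈ J.map (Ideal.Quotient.mkₐ F (I.map (C : R →+* R[X]))))
      (mul_comm b a)) (Ideal.mul_mem_left _ b ha)⟩
  refine ⟨(Ideal.quotientEquivAlg (cyclotomicIdeal F p (n + 1) d)
      (I.map (C : R →+* R[X]) ⊔ J) e₁ himg).trans
    (((DoubleQuot.quotQuotEquivQuotSupₐ F (I.map (C : R →+* R[X])) J).symm).trans
      (Ideal.quotientEquivAlg (J.map (Ideal.Quotient.mkₐ F (I.map (C : R →+* R[X]))))
        (Ideal.span {cyclotomic (p ^ d 0) (R ⧸ I)})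
        ((polyQuotAlgEquiv F I).symm) ?_))⟩
  rw [hJ, Ideal.map_span, Ideal.map_span, Set.image_singleton, Set.image_singleton]
  congr 1
  have h1 : (Ideal.Quotient.mkₐ F (I.map (C : R →+* R[X]))) (cyclotomic (p ^ d 0) R)
      = Ideal.Quotient.mk (I.map (C : R →+* R[X])) (cyclotomic (p ^ d 0) R) := rfl
  rw [h1]
  have h2 : ((polyQuotAlgEquiv F I).symm :
      (R[X] ⧸ Ideal.map (C : R →+* R[X]) I) →+* Polynomial (R ⧸ I))
      (Ideal.Quotient.mk (I.map (C : R →+* R[X])) (cyclotomic (p ^ d 0) R))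
      = (cyclotomic (p ^ d 0) R).map (Ideal.Quotient.mk I) :=
    Ideal.polynomialQuotientEquivQuotientPolynomial_symm_mk I _
  rw [h2, map_cyclotomic]

/-- Transport of the quotient by a cyclotomic polynomial along a base-ring equivalence. -/
noncomputable def quotSpanCyclotomicCongr {F R S : Type*} [CommSemiring F] [CommRing R]
    [CommRing S] [Algebra F R] [Algebra F S] (E : R ≃ₐ[F] S) (N : ℕ) :
    (R[X] ⧸ Ideal.span {cyclotomic N R}) ≃ₐ[F] (S[X] ⧸ Ideal.span {cyclotomic N S}) := by
  refine Ideal.quotientEquivAlg _ _ (Polynomial.mapAlgEquiv E) ?_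
  rw [Ideal.map_span, Set.image_singleton]
  congr 1
  have : (Polynomial.mapAlgEquiv E : R[X] →+* S[X]) (cyclotomic N R)
      = (cyclotomic N R).map (E : R →+* S) := by
    simp [Polynomial.coe_mapAlgEquiv]
  rw [this, map_cyclotomic]

set_option synthInstance.maxHeartbeats 1000000 in
lemma main_induction (F : Type*) [Field F] [CharZero F] {p : ℕ} (hp : p.Prime) :
    ∀ (n : ℕ) (d : Fin (n + 1) → ℕ), (∀ i, d i ≤ d (Fin.last n)) →
    Nonempty ((MvPolynomial (Fin (n + 1)) F ⧸ cyclotomicIdeal F p (n + 1) d) ≃ₐ[F]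
      (Fin (∏ i : Fin n, (p ^ d i.castSucc).totient) →
        AdjoinRoot (cyclotomic (p ^ d (Fin.last n)) F))) := by
  intro n
  induction n with
  | zero =>
    intro d hd
    obtain ⟨e⟩ := peel F p 0 d
    have hbot : cyclotomicIdeal F p 0 (d ∘ Fin.succ) = ⊥ := by
      rw [cyclotomicIdeal, Set.range_eq_empty, Ideal.span_empty]
    have Ebot : (MvPolynomial (Fin 0) F ⧸ cyclotomicIdeal F p 0 (d ∘ Fin.succ)) ≃ₐ[F]
        MvPolynomial (Fin 0) F := by
      refine AlgEquiv.ofRingEquiv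
        (f := (Ideal.quotEquivOfEq hbot).trans (RingEquiv.quotientBot _)) ?_
      intro x
      rfl
    have E : (MvPolynomial (Fin 0) F ⧸ cyclotomicIdeal F p 0 (d ∘ Fin.succ)) ≃ₐ[F] F :=
      Ebot.trans (MvPolynomial.isEmptyAlgEquiv F (Fin 0))
    have hlast : d (Fin.last 0) = d 0 := rfl
    have hone : (1 : ℕ) = ∏ i : Fin 0, (p ^ d i.castSucc).totient := by simp
    exact ⟨((e.trans (quotSpanCyclotomicCongr E (p ^ d 0))).trans
      (piUniqueAlgEquiv F (AdjoinRoot (cyclotomic (p ^ d (Fin.last 0)) F)) (Fin 1))).trans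
      (piReindexAlgEquiv F _ (finCongr hone))⟩
  | succ n IH =>
    intro d hd
    obtain ⟨e⟩ := peel F p (n + 1) d
    have hsl : (d ∘ Fin.succ) (Fin.last n) = d (Fin.last (n + 1)) := by
      simp only [Function.comp_apply, Fin.succ_last]
    obtain ⟨E⟩ := IH (d ∘ Fin.succ) (fun i => by
      simp only [Function.comp_apply, Fin.succ_last]
      exact hd _)
    rw [hsl] at E
    obtain ⟨E2⟩ := pi_adjoin_step F hp (d (Fin.last (n + 1))) (d 0) (hd 0)
      (∏ i : Fin n, (p ^ (d ∘ Fin.succ) i.castSucc).totient)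
    have hprod : ((∏ i : Fin n, (p ^ (d ∘ Fin.succ) i.castSucc).totient) * (p ^ d 0).totient)
        = ∏ i : Fin (n + 1), (p ^ d i.castSucc).totient := by
      rw [Fin.prod_univ_succ, mul_comm]
      congr 1
    exact ⟨((e.trans (quotSpanCyclotomicCongr E (p ^ d 0))).trans E2).trans
      (piReindexAlgEquiv F _ (finCongr hprod))⟩

lemma rename_quot (F : Type*) [Field F] (p t : ℕ) (c : Fin t → ℕ) (σ : Fin t ≃ Fin t) :
    Nonempty ((MvPolynomial (Fin t) F ⧸ cyclotomicIdeal F p t c) ≃ₐ[F]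
      (MvPolynomial (Fin t) F ⧸ cyclotomicIdeal F p t (c ∘ σ.symm))) := by
  refine ⟨Ideal.quotientEquivAlg _ _ (MvPolynomial.renameEquiv F σ) ?_⟩
  rw [cyclotomicIdeal, cyclotomicIdeal, Ideal.map_span, ← Set.range_comp]
  congr 1
  have hcomp : ((MvPolynomial.renameEquiv F σ : MvPolynomial (Fin t) F →+* MvPolynomial (Fin t) F)
      ∘ fun i : Fin t => (Polynomial.aeval (MvPolynomial.X i)) (cyclotomic (p ^ c i) F))
      = (fun j : Fin t =>
          (Polynomial.aeval (MvPolynomial.X j)) (cyclotomic (p ^ (c ∘ σ.symm) j) F)) ∘ σ := by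
    funext i
    simp only [Function.comp_apply, Equiv.symm_apply_apply]
    have h1 := Polynomial.aeval_algHom_apply
      (MvPolynomial.rename σ : MvPolynomial (Fin t) F →ₐ[F] MvPolynomial (Fin t) F)
      (MvPolynomial.X i) (cyclotomic (p ^ c i) F)
    rw [MvPolynomial.rename_X] at h1
    exact h1.symm
  rw [hcomp, Set.range_comp, Equiv.range_eq_univ, Set.image_univ]

end MvQuot

theorem multi_cyclotomic_same_prime_equiv_pi
    (F : Type*) [Field F] [CharZero F] (p : ℕ) (hp : p.Prime)
    (t : ℕ) (ht : 0 < t) (c : Fin t → ℕ)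
    (hc : ∀ i, c i ≤ c ⟨0, ht⟩) :
    Nonempty
      ((MvPolynomial (Fin t) F ⧸ cyclotomicIdeal F p t c)
        ≃ₐ[F]
        (Fin (∏ i ∈ Finset.univ.erase (⟨0, ht⟩ : Fin t), (p ^ c i).totient)
          → AdjoinRoot (cyclotomic (p ^ c ⟨0, ht⟩) F))) ∧
    (∏ i ∈ Finset.univ.erase (⟨0, ht⟩ : Fin t), (p ^ c i).totient) =
      Module.finrank F (MvPolynomial (Fin t) F ⧸ cyclotomicIdeal F p t c) /
        Module.finrank F (AdjoinRoot (cyclotomic (p ^ c ⟨0, ht⟩) F)) := by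
  obtain ⟨n, rfl⟩ : ∃ n, t = n + 1 := ⟨t - 1, (Nat.succ_pred_eq_of_pos ht).symm⟩
  have h0 : (⟨0, ht⟩ : Fin (n + 1)) = 0 := rfl
  set σ : Fin (n + 1) ≃ Fin (n + 1) := Equiv.swap 0 (Fin.last n) with hσ
  have hss : σ.symm = σ := Equiv.symm_swap _ _
  obtain ⟨E1⟩ := rename_quot F p (n + 1) c σ
  have hd : ∀ i, (c ∘ σ.symm) i ≤ (c ∘ σ.symm) (Fin.last n) := by
    intro i
    have h1 : (c ∘ σ.symm) (Fin.last n) = c 0 := by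
      simp only [Function.comp_apply, hss, hσ, Equiv.symm_swap, Equiv.swap_apply_right]
    rw [h1]
    exact hc _
  obtain ⟨E2⟩ := main_induction F hp n (c ∘ σ.symm) hd
  have hx : (c ∘ σ.symm) (Fin.last n) = c ⟨0, ht⟩ := by
    simp only [Function.comp_apply, hss, hσ, Equiv.symm_swap, Equiv.swap_apply_right]
    rfl
  rw [hx] at E2
  -- the product identity
  have hf0 : (0 : ℕ) < (p ^ c (0 : Fin (n + 1))).totient :=
    Nat.totient_pos.mpr (pow_pos hp.pos _)
  have numeq : (∏ i : Fin n, (p ^ (c ∘ σ.symm) i.castSucc).totient)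
      = ∏ i ∈ Finset.univ.erase (⟨0, ht⟩ : Fin (n + 1)), (p ^ c i).totient := by
    have key : (∏ i : Fin n, (p ^ (c ∘ σ.symm) i.castSucc).totient)
          * (p ^ c (0 : Fin (n + 1))).totient
        = (∏ i ∈ Finset.univ.erase (⟨0, ht⟩ : Fin (n + 1)), (p ^ c i).totient)
          * (p ^ c (0 : Fin (n + 1))).totient := by
      have h1 : (∏ i : Fin n, (p ^ (c ∘ σ.symm) i.castSucc).totient)
          * (p ^ c (0 : Fin (n + 1))).totient
          = ∏ j : Fin (n + 1), (p ^ c (σ j)).totient := by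
        have hlast : σ (Fin.last n) = 0 := Equiv.swap_apply_right _ _
        simp only [Function.comp_apply, hss]
        rw [← hlast]
        exact (Fin.prod_univ_castSucc (fun j : Fin (n + 1) => (p ^ c (σ j)).totient)).symm
      have h2 : ∏ j : Fin (n + 1), (p ^ c (σ j)).totient
          = ∏ j : Fin (n + 1), (p ^ c j).totient :=
        Equiv.prod_comp σ fun j => (p ^ c j).totient
      have h3 : (∏ i ∈ Finset.univ.erase (⟨0, ht⟩ : Fin (n + 1)), (p ^ c i).totient)
          * (p ^ c (0 : Fin (n + 1))).totient
          = ∏ j : Fin (n + 1), (p ^ c j).totient := by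
        rw [h0]
        exact Finset.prod_erase_mul _ _ (Finset.mem_univ _)
      rw [h1, h2, h3]
    exact Nat.eq_of_mul_eq_mul_right hf0 key
  have E3 := (E1.trans E2).trans
    (piReindexAlgEquiv F (AdjoinRoot (cyclotomic (p ^ c ⟨0, ht⟩) F)) (finCongr numeq))
  refine ⟨⟨E3⟩, ?_⟩
  -- dimension count
  have hΦne : cyclotomic (p ^ c (⟨0, ht⟩ : Fin (n + 1))) F ≠ 0 := cyclotomic_ne_zero _ F
  let pb := AdjoinRoot.powerBasis hΦne
  haveI : Module.Finite F (AdjoinRoot (cyclotomic (p ^ c (⟨0, ht⟩ : Fin (n + 1))) F)) :=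
    Module.Finite.of_basis pb.basis
  have hfra : Module.finrank F (AdjoinRoot (cyclotomic (p ^ c (⟨0, ht⟩ : Fin (n + 1))) F))
      = (p ^ c (⟨0, ht⟩ : Fin (n + 1))).totient := by
    rw [pb.finrank, AdjoinRoot.powerBasis_dim, natDegree_cyclotomic]
  have hpi : Module.finrank F
      (Fin (∏ i ∈ Finset.univ.erase (⟨0, ht⟩ : Fin (n + 1)), (p ^ c i).totient)
        → AdjoinRoot (cyclotomic (p ^ c (⟨0, ht⟩ : Fin (n + 1))) F))
      = (∏ i ∈ Finset.univ.erase (⟨0, ht⟩ : Fin (n + 1)), (p ^ c i).totient)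
        * Module.finrank F (AdjoinRoot (cyclotomic (p ^ c (⟨0, ht⟩ : Fin (n + 1))) F)) := by
    rw [Module.finrank_pi_fintype, Finset.sum_const, Finset.card_univ, Fintype.card_fin,
      smul_eq_mul]
  have hfrA : Module.finrank F (MvPolynomial (Fin (n + 1)) F ⧸ cyclotomicIdeal F p (n + 1) c)
      = (∏ i ∈ Finset.univ.erase (⟨0, ht⟩ : Fin (n + 1)), (p ^ c i).totient)
        * Module.finrank F (AdjoinRoot (cyclotomic (p ^ c (⟨0, ht⟩ : Fin (n + 1))) F)) := by
    rw [← hpi]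
    exact E3.toLinearEquiv.finrank_eq
  rw [hfrA]
  have hrpos : 0 < Module.finrank F (AdjoinRoot (cyclotomic (p ^ c (⟨0, ht⟩ : Fin (n + 1))) F)) := by
    rw [hfra]
    exact Nat.totient_pos.mpr (pow_pos hp.pos _)
  exact (Nat.mul_div_cancel _ hrpos).symm
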